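/- Let f : (0,∞) → ℝ be measurable with Laplace transform F(p) = ∫_0^∞ e^{-pt} f(t) dt absolutely convergent for all p > 0, and assume f ≥ 0. Then for all p > 0, ∫_0^∞ e^{-px} (∫_0^∞ t (4πx³)^{-1/2} exp(-t²/(4x)) f(t) dt) dx = F(√p). -/

import Mathlib

open MeasureTheory Real Set

lemma hasDeriv_phi1 (c : ℝ) {s : ℝ} (hs : s ≠ 0) :
    HasDerivAt (fun s => s - c/s) (1 + c/s^2) s := by
  have h1 : HasDerivAt (fun y : ℝ => c / y) (c * -(s^2)⁻¹) s := by
    simpa [div_eq_mul_inv] using (hasDerivAt_inv hs).const_mul c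
  have h2 := (hasDerivAt_id s).sub h1
  exact ((hasDerivAt_id' s).sub h1).congr_deriv (by ring)

lemma phi1_image {c : ℝ} (hc : 0 < c) : (fun s => s - c/s) '' Ioi 0 = univ := by
  apply eq_univ_of_forall
  intro u
  set r := Real.sqrt (u^2 + 4*c) with hrdef
  have h4 : (0:ℝ) ≤ u^2 + 4*c := by positivity
  have hr2 : r^2 = u^2 + 4*c := Real.sq_sqrt h4
  have hrn : 0 ≤ r := Real.sqrt_nonneg _
  have hspos : 0 < (u + r)/2 := by nlinarith
  refine ⟨(u + r)/2, hspos, ?_⟩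
  have hne : u + r ≠ 0 := by
    have : 0 < u + r := by linarith [hspos]
    exact this.ne'
  field_simp
  nlinarith

section Glasser
variable {c : ℝ} (hc : 0 < c)

include hc in
lemma sub_aux1 :
    (∫ x in (fun s : ℝ => s - c/s) '' Ioi 0, Real.exp (-x^2))
      = ∫ s in Ioi (0:ℝ), (1 + c/s^2) * Real.exp (-(s - c/s)^2) := by
  rw [integral_image_eq_integral_abs_deriv_smul measurableSet_Ioi
    (fun s hs => (hasDeriv_phi1 c (ne_of_gt hs)).hasDerivWithinAt)
    (fun a ha b hb h => by
      simp only [mem_Ioi] at ha hb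
      field_simp at h
      have key : (a - b) * (a*b + c) = 0 := by linear_combination h
      have hab : 0 < a*b + c := by positivity
      have := mul_eq_zero.1 key
      rcases this with h1 | h1
      · linarith
      · exact absurd h1 hab.ne')]
  refine setIntegral_congr_fun measurableSet_Ioi (fun s hs => ?_)
  simp only [mem_Ioi] at hs
  have h1 : 0 < 1 + c/s^2 := by positivity
  rw [abs_of_pos h1, smul_eq_mul]

include hc in
lemma sub_aux2 :
    (∫ s in Ioi (0:ℝ), Real.exp (-(s - c/s)^2))
      = ∫ s in Ioi (0:ℝ), (c/s^2) * Real.exp (-(s - c/s)^2) := by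
  have himg : (fun s : ℝ => c/s) '' Ioi 0 = Ioi 0 := by
    ext y
    constructor
    · rintro ⟨s, hs, rfl⟩
      simp only [mem_Ioi] at hs ⊢
      positivity
    · intro hy
      simp only [mem_Ioi] at hy
      exact ⟨c/y, mem_Ioi.2 (by positivity), by field_simp⟩
  have hder : ∀ s ∈ Ioi (0:ℝ), HasDerivWithinAt (fun s : ℝ => c/s) (-(c/s^2)) (Ioi 0) s := by
    intro s hs
    simp only [mem_Ioi] at hs
    have : HasDerivAt (fun y : ℝ => c / y) (c * -(s^2)⁻¹) s := by
      simpa [div_eq_mul_inv] using (hasDerivAt_inv hs.ne').const_mul c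
    exact (this.congr_deriv (by field_simp)).hasDerivWithinAt
  have hinj : InjOn (fun s : ℝ => c/s) (Ioi 0) := by
    intro a ha b hb h
    simp only [mem_Ioi] at ha hb
    field_simp at h
    exact h.symm
  conv_lhs => rw [← himg]
  rw [integral_image_eq_integral_abs_deriv_smul measurableSet_Ioi hder hinj]
  refine setIntegral_congr_fun measurableSet_Ioi (fun s hs => ?_)
  simp only [mem_Ioi] at hs
  have h1 : 0 < c/s^2 := by positivity
  rw [abs_neg, abs_of_pos h1, smul_eq_mul]
  have : c/(c/s) = s := by field_simp
  rw [this]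
  ring_nf

include hc in
lemma sum_integrable :
    IntegrableOn (fun s => (1 + c/s^2) * Real.exp (-(s - c/s)^2)) (Ioi 0) := by
  have h := (integrableOn_image_iff_integrableOn_abs_deriv_smul measurableSet_Ioi
    (fun s (hs : s ∈ Ioi (0:ℝ)) => (hasDeriv_phi1 c (ne_of_gt hs)).hasDerivWithinAt)
    (fun a ha b hb h => by
      simp only [mem_Ioi] at ha hb
      field_simp at h
      have key : (a - b) * (a*b + c) = 0 := by linear_combination h
      have hab : 0 < a*b + c := by positivity
      rcases mul_eq_zero.1 key with h1 | h1
      · linarith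
      · exact absurd h1 hab.ne')
    (fun x => Real.exp (-x^2))).1 ?_
  · refine h.congr_fun (fun s hs => ?_) measurableSet_Ioi
    simp only [mem_Ioi] at hs
    have h1 : 0 < 1 + c/s^2 := by positivity
    dsimp only
    rw [abs_of_pos h1, smul_eq_mul]
  · rw [phi1_image hc]
    have : Integrable (fun x : ℝ => Real.exp (-x^2)) := by
      simpa using integrable_exp_neg_mul_sq (one_pos)
    exact this.integrableOn

include hc in
lemma glasser_integrable :
    IntegrableOn (fun s => Real.exp (-(s - c/s)^2)) (Ioi 0) := by
  refine MeasureTheory.Integrable.mono (sum_integrable hc) ?_ ?_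
  · apply Measurable.aestronglyMeasurable
    fun_prop
  · filter_upwards [ae_restrict_mem measurableSet_Ioi] with s hs
    simp only [mem_Ioi] at hs
    have h1 : (0:ℝ) < 1 + c/s^2 := by positivity
    rw [Real.norm_eq_abs, Real.norm_eq_abs, abs_of_pos (Real.exp_pos _),
      abs_of_pos (by positivity)]
    nlinarith [Real.exp_pos (-(s - c/s)^2), div_nonneg hc.le (sq_nonneg s)]

include hc in
lemma glasser_integrable2 :
    IntegrableOn (fun s => (c/s^2) * Real.exp (-(s - c/s)^2)) (Ioi 0) := by
  have h3 : IntegrableOn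
      ((fun s => (1 + c/s^2) * Real.exp (-(s - c/s)^2)) - fun s => Real.exp (-(s - c/s)^2))
      (Ioi 0) := (sum_integrable hc).sub (glasser_integrable hc)
  refine IntegrableOn.congr_fun h3 (fun s hs => ?_) measurableSet_Ioi
  simp only [Pi.sub_apply]
  ring

include hc in
lemma glasser :
    (∫ s in Ioi (0:ℝ), Real.exp (-(s - c/s)^2)) = Real.sqrt π / 2 := by
  have h0 : (∫ x : ℝ, Real.exp (-x^2)) = Real.sqrt π := by
    simpa using integral_gaussian 1
  have h1 : (∫ x in (fun s : ℝ => s - c/s) '' Ioi 0, Real.exp (-x^2)) = Real.sqrt π := by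
    rw [phi1_image hc, Measure.restrict_univ, h0]
  rw [sub_aux1 hc] at h1
  have h2 : (∫ s in Ioi (0:ℝ), (1 + c/s^2) * Real.exp (-(s - c/s)^2))
      = (∫ s in Ioi (0:ℝ), Real.exp (-(s - c/s)^2))
        + ∫ s in Ioi (0:ℝ), (c/s^2) * Real.exp (-(s - c/s)^2) := by
    rw [← integral_add (glasser_integrable hc) (glasser_integrable2 hc)]
    refine setIntegral_congr_fun measurableSet_Ioi (fun s hs => ?_)
    ring
  rw [h2, ← sub_aux2 hc] at h1
  linarith

section Key
variable {p t : ℝ} (hp : 0 < p) (ht : 0 < t)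

include hp ht in
lemma key_pointwise {s : ℝ} (hs : 0 < s) :
    |(-(t^2/(2*s^3)))| • (Real.exp (-p*(t^2/(4*s^2))) *
      (t * (4*π*(t^2/(4*s^2))^3) ^ (-(1:ℝ)/2) * Real.exp (-t^2 / (4*(t^2/(4*s^2))))))
    = Real.exp (-(Real.sqrt p) * t) * (2/Real.sqrt π) *
        Real.exp (-(s - (t*Real.sqrt p/2)/s)^2) := by
  have hr : Real.sqrt p ^ 2 = p := Real.sq_sqrt hp.le
  have hrpos : 0 < Real.sqrt p := Real.sqrt_pos.2 hp
  have hπ : (0:ℝ) < π := pi_pos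
  have hπs : Real.sqrt π ^ 2 = π := Real.sq_sqrt hπ.le
  have hπpos : 0 < Real.sqrt π := Real.sqrt_pos.2 hπ
  have hX : (4*π*(t^2/(4*s^2))^3) = (Real.sqrt π * t^3/(4*s^3))^2 := by
    field_simp
    linear_combination (-1 : ℝ) * hπs
  have hYpos : 0 < Real.sqrt π * t^3/(4*s^3) := by positivity
  have hrw : (4*π*(t^2/(4*s^2))^3) ^ (-(1:ℝ)/2) = (Real.sqrt π * t^3/(4*s^3))⁻¹ := by
    rw [hX, show (-(1:ℝ)/2) = -(1/2) by norm_num, Real.rpow_neg (sq_nonneg _)]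
    congr 1
    rw [← Real.sqrt_eq_rpow, Real.sqrt_sq hYpos.le]
  have hB : -t^2 / (4*(t^2/(4*s^2))) = -s^2 := by field_simp
  rw [smul_eq_mul, abs_neg, abs_of_pos (by positivity : (0:ℝ) < t^2/(2*s^3)), hrw, hB]
  have e1 : Real.exp (-p*(t^2/(4*s^2))) * Real.exp (-s^2)
      = Real.exp (-(Real.sqrt p)*t) * Real.exp (-(s - (t*Real.sqrt p/2)/s)^2) := by
    rw [← Real.exp_add, ← Real.exp_add]
    congr 1
    field_simp
    linear_combination (4 * t^2) * hr
  calc t^2/(2*s^3) * (Real.exp (-p*(t^2/(4*s^2))) *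
        (t * (Real.sqrt π * t^3/(4*s^3))⁻¹ * Real.exp (-s^2)))
      = (t^2/(2*s^3) * t * (Real.sqrt π * t^3/(4*s^3))⁻¹) *
          (Real.exp (-p*(t^2/(4*s^2))) * Real.exp (-s^2)) := by ring
    _ = (2/Real.sqrt π) *
          (Real.exp (-(Real.sqrt p)*t) * Real.exp (-(s - (t*Real.sqrt p/2)/s)^2)) := by
        rw [e1]
        congr 1
        field_simp
        ring
    _ = Real.exp (-(Real.sqrt p) * t) * (2/Real.sqrt π) *
          Real.exp (-(s - (t*Real.sqrt p/2)/s)^2) := by ring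
end Key

lemma phi2_image {t : ℝ} (ht : 0 < t) : (fun s : ℝ => t^2/(4*s^2)) '' Ioi 0 = Ioi 0 := by
  ext y
  constructor
  · rintro ⟨s, hs, rfl⟩
    simp only [mem_Ioi] at hs ⊢
    positivity
  · intro hy
    simp only [mem_Ioi] at hy
    have hsy : Real.sqrt y ^ 2 = y := Real.sq_sqrt hy.le
    have hsyp : 0 < Real.sqrt y := Real.sqrt_pos.2 hy
    refine ⟨t/(2*Real.sqrt y), mem_Ioi.2 (by positivity), ?_⟩
    have h1 : (t/(2*Real.sqrt y))^2 = t^2/(4*y) := by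
      rw [div_pow, mul_pow, hsy]; norm_num
    show t^2/(4*(t/(2*Real.sqrt y))^2) = y
    rw [h1]
    field_simp

lemma phi2_deriv {t : ℝ} : ∀ s ∈ Ioi (0:ℝ),
    HasDerivWithinAt (fun s : ℝ => t^2/(4*s^2)) (-(t^2/(2*s^3))) (Ioi 0) s := by
  intro s hs
  simp only [mem_Ioi] at hs
  have h1 : HasDerivAt (fun x : ℝ => (x^2)⁻¹) (-(2*s^(2-1)) / (s^2)^2) s :=
    (hasDerivAt_pow 2 s).inv (pow_ne_zero 2 hs.ne')
  have h2 := h1.const_mul (t^2/4)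
  have hfn : (fun x : ℝ => t^2/(4*x^2)) = fun x : ℝ => t^2/4 * (x^2)⁻¹ := by
    funext x
    simp [div_eq_mul_inv, mul_inv]
    ring
  rw [hfn]
  exact (h2.congr_deriv (by field_simp; ring)).hasDerivWithinAt

lemma phi2_inj {t : ℝ} (ht : 0 < t) : InjOn (fun s : ℝ => t^2/(4*s^2)) (Ioi 0) := by
  intro a ha b hb h
  simp only [mem_Ioi] at ha hb
  field_simp at h
  first
  | exact h.symm
  | exact h
  | exact (pow_left_inj₀ ha.le hb.le two_ne_zero).1 h.symm

lemma key_eq {p t : ℝ} (hp : 0 < p) (ht : 0 < t) :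
    ∫ x in Ioi (0:ℝ), Real.exp (-p*x) * (t * (4*π*x^3) ^ (-(1:ℝ)/2) * Real.exp (-t^2/(4*x)))
      = Real.exp (-(Real.sqrt p) * t) := by
  have hcpos : 0 < t * Real.sqrt p / 2 := by
    have := Real.sqrt_pos.2 hp
    positivity
  conv_lhs => rw [← phi2_image ht]
  rw [integral_image_eq_integral_abs_deriv_smul measurableSet_Ioi phi2_deriv (phi2_inj ht)]
  rw [setIntegral_congr_fun measurableSet_Ioi
    (fun s hs => key_pointwise hp ht (mem_Ioi.1 hs))]
  rw [MeasureTheory.integral_const_mul, glasser hcpos]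
  have hπpos : 0 < Real.sqrt π := Real.sqrt_pos.2 pi_pos
  field_simp

lemma key_integrable {p t : ℝ} (hp : 0 < p) (ht : 0 < t) :
    IntegrableOn (fun x => Real.exp (-p*x) * (t * (4*π*x^3) ^ (-(1:ℝ)/2) * Real.exp (-t^2/(4*x))))
      (Ioi 0) := by
  have hcpos : 0 < t * Real.sqrt p / 2 := by
    have := Real.sqrt_pos.2 hp
    positivity
  rw [show Ioi (0:ℝ) = (fun s : ℝ => t^2/(4*s^2)) '' Ioi 0 from (phi2_image ht).symm]
  refine (integrableOn_image_iff_integrableOn_abs_deriv_smul measurableSet_Ioi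
    phi2_deriv (phi2_inj ht) _).2 ?_
  refine IntegrableOn.congr_fun ?_
    (fun s hs => (key_pointwise hp ht (mem_Ioi.1 hs)).symm) measurableSet_Ioi
  exact (glasser_integrable hcpos).const_mul _

lemma inner_integrable (f : ℝ → ℝ) (hf : Measurable f)
    (hint : ∀ p : ℝ, 0 < p → IntegrableOn (fun t => Real.exp (-p * t) * f t) (Ioi 0))
    {x : ℝ} (hx : 0 < x) :
    IntegrableOn (fun t => t * (4*π*x^3) ^ (-(1:ℝ)/2) * Real.exp (-t^2/(4*x)) * f t)
      (Ioi 0) := by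
  set C : ℝ := (4*π*x^3) ^ (-(1:ℝ)/2) with hCdef
  have hC : (0:ℝ) ≤ C := Real.rpow_nonneg (by positivity) _
  have hI := (hint (1/2) (by norm_num)).const_mul (C * (2 * Real.exp x))
  refine MeasureTheory.Integrable.mono hI ?_ ?_
  · apply Measurable.aestronglyMeasurable
    fun_prop
  · filter_upwards [ae_restrict_mem measurableSet_Ioi] with t ht
    simp only [mem_Ioi] at ht
    have hkey : t * Real.exp (-t^2/(4*x)) ≤ 2 * Real.exp x * Real.exp (-(1/2) * t) := by
      have h1 : Real.exp (-t^2/(4*x)) ≤ Real.exp (x - t) := by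
        apply Real.exp_le_exp.2
        rw [div_le_iff₀ (by positivity : (0:ℝ) < 4*x)]
        nlinarith [sq_nonneg (t - 2*x)]
      have h2 : t ≤ 2 * Real.exp (t/2) := by
        nlinarith [Real.add_one_le_exp (t/2)]
      calc t * Real.exp (-t^2/(4*x)) ≤ (2 * Real.exp (t/2)) * Real.exp (x - t) :=
            mul_le_mul h2 h1 (Real.exp_pos _).le (by positivity)
        _ = 2 * Real.exp (t/2 + (x - t)) := by rw [mul_assoc, Real.exp_add]
        _ = 2 * Real.exp (x + -(1/2) * t) := by ring_nf
        _ = 2 * Real.exp x * Real.exp (-(1/2) * t) := by rw [Real.exp_add]; ring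
    calc ‖t * C * Real.exp (-t^2/(4*x)) * f t‖
        = (t * C * Real.exp (-t^2/(4*x))) * |f t| := by
          rw [Real.norm_eq_abs, abs_mul, abs_of_nonneg (by positivity)]
      _ ≤ (C * (2 * Real.exp x) * Real.exp (-(1/2) * t)) * |f t| := by
          have hmain : t * C * Real.exp (-t^2/(4*x)) ≤
              C * (2 * Real.exp x) * Real.exp (-(1/2) * t) := by
            nlinarith [hkey, hC, Real.exp_pos (-t^2/(4*x)), Real.exp_pos (-(1/2)*t)]
          exact mul_le_mul_of_nonneg_right hmain (abs_nonneg _)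
      _ = ‖C * (2 * Real.exp x) * (Real.exp (-(1/2) * t) * f t)‖ := by
          simp only [Real.norm_eq_abs, abs_mul, abs_of_nonneg hC,
            abs_of_nonneg (Real.exp_pos _).le,
            abs_of_nonneg (by norm_num : (0:ℝ) ≤ 2)]
          ring

theorem laplace_halfSubordination (f : ℝ → ℝ) (hf : Measurable f)
    (hpos : ∀ t ∈ Ioi (0 : ℝ), 0 ≤ f t)
    (hint : ∀ p : ℝ, 0 < p →
      IntegrableOn (fun t => Real.exp (-p * t) * f t) (Ioi 0))
    (F : ℝ → ℝ) (hF : ∀ p : ℝ, F p = ∫ t in Ioi (0 : ℝ), Real.exp (-p * t) * f t) :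
    ∀ p : ℝ, 0 < p →
      (∫ x in Ioi (0 : ℝ), Real.exp (-p * x) *
        ∫ t in Ioi (0 : ℝ),
          t * (4 * π * x ^ 3) ^ (-(1 : ℝ) / 2) * Real.exp (-t ^ 2 / (4 * x)) * f t)
        = F (Real.sqrt p) := by
  intro p hp
  have hsp : 0 < Real.sqrt p := Real.sqrt_pos.2 hp
  have hmeas : Measurable fun q : ℝ × ℝ =>
      Real.exp (-p * q.1) * (q.2 * (4*π*q.1^3) ^ (-(1:ℝ)/2) *
        Real.exp (-q.2^2/(4*q.1)) * f q.2) := by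
    fun_prop
  have hintg : Integrable (Function.uncurry fun x t =>
      Real.exp (-p * x) * (t * (4*π*x^3) ^ (-(1:ℝ)/2) * Real.exp (-t^2/(4*x)) * f t))
      ((volume.restrict (Ioi (0:ℝ))).prod (volume.restrict (Ioi (0:ℝ)))) := by
    refine (integrable_prod_iff' ?_).2 ⟨?_, ?_⟩
    · exact hmeas.aestronglyMeasurable
    · filter_upwards [ae_restrict_mem measurableSet_Ioi] with t ht
      simp only [mem_Ioi] at ht
      have h1 := (key_integrable hp ht).mul_const (f t)
      exact h1.congr (Filter.Eventually.of_forall fun x => by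
        simp only [Function.uncurry]; ring)
    · have hgoal : Integrable (fun t => Real.exp (-Real.sqrt p * t) * f t)
        (volume.restrict (Ioi (0:ℝ))) := hint _ hsp
      refine hgoal.congr ?_
      filter_upwards [ae_restrict_mem measurableSet_Ioi] with t ht
      simp only [mem_Ioi] at ht
      simp only [Function.uncurry]
      have h2 : ∫ x in Ioi (0:ℝ),
          ‖Real.exp (-p*x) * (t * (4*π*x^3) ^ (-(1:ℝ)/2) *
            Real.exp (-t^2/(4*x)) * f t)‖
          = ∫ x in Ioi (0:ℝ),
            (Real.exp (-p*x) * (t * (4*π*x^3) ^ (-(1:ℝ)/2) *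
              Real.exp (-t^2/(4*x)))) * f t := by
        refine setIntegral_congr_fun measurableSet_Ioi (fun x hx => ?_)
        simp only [mem_Ioi] at hx
        have hC : (0:ℝ) ≤ (4*π*x^3) ^ (-(1:ℝ)/2) := Real.rpow_nonneg (by positivity) _
        have hft := hpos t (mem_Ioi.2 ht)
        rw [Real.norm_eq_abs, abs_of_nonneg (by positivity)]
        ring
      rw [h2, MeasureTheory.integral_mul_const, key_eq hp ht]
  rw [hF]
  calc (∫ x in Ioi (0:ℝ), Real.exp (-p * x) *
        ∫ t in Ioi (0:ℝ), t * (4*π*x^3) ^ (-(1:ℝ)/2) * Real.exp (-t^2/(4*x)) * f t)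
      = ∫ x in Ioi (0:ℝ), ∫ t in Ioi (0:ℝ),
          Real.exp (-p * x) * (t * (4*π*x^3) ^ (-(1:ℝ)/2) * Real.exp (-t^2/(4*x)) * f t) := by
        refine setIntegral_congr_fun measurableSet_Ioi (fun x hx => ?_)
        exact (MeasureTheory.integral_const_mul _ _).symm
    _ = ∫ t in Ioi (0:ℝ), ∫ x in Ioi (0:ℝ),
          Real.exp (-p * x) * (t * (4*π*x^3) ^ (-(1:ℝ)/2) * Real.exp (-t^2/(4*x)) * f t) :=
        MeasureTheory.integral_integral_swap hintg
    _ = ∫ t in Ioi (0:ℝ), Real.exp (-Real.sqrt p * t) * f t := by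
        refine setIntegral_congr_fun measurableSet_Ioi (fun t ht => ?_)
        simp only [mem_Ioi] at ht
        simp_rw [show ∀ x : ℝ, Real.exp (-p*x) * (t * (4*π*x^3) ^ (-(1:ℝ)/2) *
            Real.exp (-t^2/(4*x)) * f t)
          = (Real.exp (-p*x) * (t * (4*π*x^3) ^ (-(1:ℝ)/2) * Real.exp (-t^2/(4*x)))) * f t
          from fun x => by ring]
        rw [MeasureTheory.integral_mul_const, key_eq hp ht]
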